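/- Let k ⊆ K be a field extension and let B be a commutative k-algebra. If B ⊗_k K is a finitely generated K-algebra, then B is a finitely generated k-algebra. -/

import Mathlib

open TensorProduct

attribute [local instance] Algebra.TensorProduct.rightAlgebra

set_option maxHeartbeats 1000000 in
set_option synthInstance.maxHeartbeats 200000 in
/-- If `k ⊆ K` is a field extension and `B` is a commutative `k`-algebra such that
`B ⊗[k] K` is a finitely generated `K`-algebra, then `B` is a finitely generated
`k`-algebra. -/
theorem finiteType_of_finiteType_baseChange
    (k K : Type) [Field k] [Field K] [Algebra k K]
    (B : Type) [CommRing B] [Algebra k B]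
    (h : Algebra.FiniteType K (B ⊗[k] K)) :
    Algebra.FiniteType k B := by
  obtain ⟨S, hS⟩ := h.1
  -- for each generator, pick a finset of simple tensors
  choose rep hrep using fun s : S => TensorProduct.exists_finset (s : B ⊗[k] K)
  classical
  -- the finite set of first components
  let T : Finset B := S.attach.biUnion fun s => (rep s).image Prod.fst
  set A : Subalgebra k B := Algebra.adjoin k (T : Set B) with hA
  -- the base-changed map A ⊗ K → B ⊗ K
  let f : A ⊗[k] K →ₐ[k] B ⊗[k] K :=
    Algebra.TensorProduct.map A.val (AlgHom.id k K)
  have hfsurj : Function.Surjective f := by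
    intro x
    have hx : x ∈ Algebra.adjoin K (S : Set (B ⊗[k] K)) := by
      rw [hS]; trivial
    refine Algebra.adjoin_induction ?_ ?_ ?_ ?_ hx
    · intro s hs
      -- s = ∑ simple tensors with first components in T
      have hmem : ∀ p ∈ rep ⟨s, hs⟩, p.1 ∈ A := by
        intro p hp
        apply Algebra.subset_adjoin
        simp only [T, Finset.coe_biUnion, Finset.mem_coe, Finset.mem_attach,
          Set.iUnion_true, Set.mem_iUnion, Finset.coe_image, Set.mem_image]
        exact ⟨⟨s, hs⟩, p, hp, rfl⟩
      refine ⟨∑ p ∈ (rep ⟨s, hs⟩).attach, (⟨p.1.1, hmem p.1 p.2⟩ : A) ⊗ₜ[k] p.1.2, ?_⟩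
      have heq : s = ∑ p ∈ rep ⟨s, hs⟩, p.1 ⊗ₜ[k] p.2 := hrep ⟨s, hs⟩
      conv_rhs => rw [heq, ← Finset.sum_attach (rep ⟨s, hs⟩) (fun p => p.1 ⊗ₜ[k] p.2)]
      rw [map_sum]
      rfl
    · intro c
      exact ⟨(1 : A) ⊗ₜ[k] c, rfl⟩
    · rintro x y - - ⟨a, rfl⟩ ⟨b, rfl⟩; exact ⟨a + b, map_add f a b⟩
    · rintro x y - - ⟨a, rfl⟩ ⟨b, rfl⟩; exact ⟨a * b, map_mul f a b⟩
  -- deduce A = ⊤ by faithful flatness of K over k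
  have hAtop : A = ⊤ := by
    rw [← Algebra.toSubmodule_eq_top, ← Submodule.Quotient.subsingleton_iff]
    set M := Subalgebra.toSubmodule A
    refine Module.FaithfullyFlat.rTensor_reflects_triviality k K (B ⧸ M)
      (h := ⟨fun q q' => ?_⟩)
    obtain ⟨y, rfl⟩ := LinearMap.rTensor_surjective K (g := M.mkQ)
      (Submodule.mkQ_surjective M) q
    obtain ⟨y', rfl⟩ := LinearMap.rTensor_surjective K (g := M.mkQ)
      (Submodule.mkQ_surjective M) q'
    obtain ⟨x, rfl⟩ := hfsurj y
    obtain ⟨x', rfl⟩ := hfsurj y'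
    have key : ∀ z : A ⊗[k] K, LinearMap.rTensor K M.mkQ (f z) = 0 := by
      intro z
      induction z with
      | zero => simp
      | tmul a c =>
        have : f (a ⊗ₜ[k] c) = (a : B) ⊗ₜ[k] c := rfl
        rw [this, LinearMap.rTensor_tmul, Submodule.mkQ_apply,
          (Submodule.Quotient.mk_eq_zero M).2 a.2, TensorProduct.zero_tmul]
      | add u v hu hv => rw [map_add, map_add, hu, hv, add_zero]
    rw [key x, key x']
  exact ⟨⟨T, by rw [← hA, hAtop]⟩⟩
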